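/- For a decreasing weight function φ on adjacent transpositions (i.e., φ((i,i+1)) ≤ φ((j,j+1)) whenever i > j), the weighted Kendall distance satisfies d_φ(π,σ) = Σ_{i=1}^{n} (1/2)·(Σ_{j=π⁻¹(i)}^{ℓ_i - 1} φ((j, j+1)) + Σ_{j=σ⁻¹(i)}^{ℓ_i - 1} φ((j, j+1))), where ℓ_i = (π⁻¹(i) + σ⁻¹(i) + |I_i(π,σ)|)/2 and I_i(π,σ) is the set of elements j on whose relative order with i the permutations π and σ disagree. -/

import Mathlib

open Equiv Finset

/-- The adjacent transposition swapping positions `i` and `i+1` (0-indexed);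
identity if out of range. -/
def adjSwap (n i : ℕ) : Equiv.Perm (Fin n) :=
  if h : i + 1 < n then Equiv.swap ⟨i, Nat.lt_of_succ_lt h⟩ ⟨i + 1, h⟩ else 1

/-- `ω` is between `π` and `σ`: on every pair `{a,b}`, `ω` agrees with `π` or with `σ`. -/
def Between {n : ℕ} (π ω σ : Equiv.Perm (Fin n)) : Prop :=
  ∀ a b : Fin n, (π⁻¹ a < π⁻¹ b ↔ ω⁻¹ a < ω⁻¹ b) ∨ (σ⁻¹ a < σ⁻¹ b ↔ ω⁻¹ a < ω⁻¹ b)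

/-- Kendall tau distance: minimum number of adjacent transpositions transforming `π` into `σ`. -/
noncomputable def kendall {n : ℕ} (π σ : Equiv.Perm (Fin n)) : ℕ :=
  sInf {s | ∃ l : List ℕ, (∀ i ∈ l, i + 1 < n) ∧
    σ = π * (l.map (adjSwap n)).prod ∧ l.length = s}

/-- The set of inversions between `π` and `σ` (each unordered pair `{i,j}` of disagreement
is recorded as the ordered pair `(i,j)` with `i` ranked before `j` by `π`). -/
def invSet {n : ℕ} (π σ : Equiv.Perm (Fin n)) : Finset (Fin n × Fin n) :=
  Finset.univ.filter fun p => π⁻¹ p.1 < π⁻¹ p.2 ∧ σ⁻¹ p.2 < σ⁻¹ p.1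

/-- Elements `j` on whose relative order with `i` the permutations `π` and `σ` disagree. -/
def invWith {n : ℕ} (π σ : Equiv.Perm (Fin n)) (i : Fin n) : Finset (Fin n) :=
  Finset.univ.filter fun j => ¬(π⁻¹ i < π⁻¹ j ↔ σ⁻¹ i < σ⁻¹ j)

/-- Weighted Kendall distance for weight function `φ` on adjacent transpositions
(`φ h` is the weight of swapping positions `h, h+1`, 0-indexed). -/
noncomputable def wKendall {n : ℕ} (φ : ℕ → ℝ) (π σ : Equiv.Perm (Fin n)) : ℝ :=
  sInf {w | ∃ l : List ℕ, (∀ i ∈ l, i + 1 < n) ∧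
    σ = π * (l.map (adjSwap n)).prod ∧ (l.map φ).sum = w}

/-- `w(k:l)`: sum of adjacent-transposition weights between positions `min k l` and `max k l - 1`. -/
def wsum (φ : ℕ → ℝ) (k l : ℕ) : ℝ := ∑ h ∈ Finset.Ico (min k l) (max k l), φ h

/-- The generalized (weighted) Spearman footrule `D_φ`. -/
noncomputable def DKendall {n : ℕ} (φ : ℕ → ℝ) (π σ : Equiv.Perm (Fin n)) : ℝ :=
  ∑ i : Fin n, wsum φ ((π⁻¹ i : Fin n) : ℕ) ((σ⁻¹ i : Fin n) : ℕ)

/-- Weighted transposition distance with weight function `φ` on transpositions. -/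
noncomputable def wTrans {n : ℕ} (φ : Fin n → Fin n → ℝ) (π σ : Equiv.Perm (Fin n)) : ℝ :=
  sInf {w | ∃ l : List (Fin n × Fin n), (∀ p ∈ l, p.1 ≠ p.2) ∧
    σ = π * (l.map fun p => Equiv.swap p.1 p.2).prod ∧
    (l.map fun p => φ p.1 p.2).sum = w}

/-- Weight of a path (as a list of vertices) in the complete graph `K_φ`. -/
def pathWt {n : ℕ} (φ : Fin n → Fin n → ℝ) (p : List (Fin n)) : ℝ :=
  ((p.zip p.tail).map fun q => φ q.1 q.2).sum

/-- `p` is a path from `a` to `b` (consecutive vertices distinct). -/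
def IsPath {n : ℕ} (p : List (Fin n)) (a b : Fin n) : Prop :=
  p.head? = some a ∧ p.getLast? = some b ∧ p.Chain' (· ≠ ·)

/-- Minimum weight of a path from `a` to `b` in `K_φ`. -/
noncomputable def minPathWt {n : ℕ} (φ : Fin n → Fin n → ℝ) (a b : Fin n) : ℝ :=
  sInf {w | ∃ p : List (Fin n), IsPath p a b ∧ pathWt φ p = w}

/-- The footrule-type lower/upper bounding function `D_φ` for transposition weights. -/
noncomputable def DTrans {n : ℕ} (φ : Fin n → Fin n → ℝ) (π σ : Equiv.Perm (Fin n)) : ℝ :=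
  ∑ i : Fin n, minPathWt φ (π⁻¹ i) (σ⁻¹ i)

namespace Stmt9
variable {n : ℕ}

def pos (π : Perm (Fin n)) (i : Fin n) : ℕ := (π⁻¹ i : Fin n)

abbrev dis (π σ : Perm (Fin n)) (i j : Fin n) : Prop :=
  ¬(pos π i < pos π j ↔ pos σ i < pos σ j)

def Uset (π σ : Perm (Fin n)) (i : Fin n) : Finset (Fin n) :=
  univ.filter fun j => dis π σ i j ∧ pos π i < pos π j

def Lset (π σ : Perm (Fin n)) (i : Fin n) : Finset (Fin n) :=
  univ.filter fun j => dis π σ i j ∧ pos π j < pos π i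

def UU (π σ : Perm (Fin n)) (i : Fin n) : ℕ := (Uset π σ i).card

lemma pos_lt (π : Perm (Fin n)) (i : Fin n) : pos π i < n := (π⁻¹ i).isLt

lemma pos_inj {π : Perm (Fin n)} {i j : Fin n} (h : pos π i = pos π j) : i = j := by
  have : π⁻¹ i = π⁻¹ j := Fin.ext h
  exact (π⁻¹).injective this

lemma pos_apply (π : Perm (Fin n)) (k : ℕ) (hk : k < n) : pos π (π ⟨k, hk⟩) = k := by
  simp [pos]

lemma card_coe_lt (m : ℕ) (h : m ≤ n) :
    ((univ : Finset (Fin n)).filter fun p : Fin n => (p : ℕ) < m).card = m := by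
  have : (((univ : Finset (Fin n)).filter fun p : Fin n => (p:ℕ) < m).map Fin.valEmbedding).card
      = (Finset.range m).card := by
    congr 1; ext x; simp [Fin.exists_iff]; omega
  simpa using this

lemma card_coe_gt (m : ℕ) :
    ((univ : Finset (Fin n)).filter fun p : Fin n => m < (p : ℕ)).card = n - 1 - m := by
  have : (((univ : Finset (Fin n)).filter fun p : Fin n => m < (p:ℕ)).map Fin.valEmbedding).card
      = (Finset.Ico (m+1) n).card := by
    congr 1; ext x; simp [Fin.exists_iff]
  rw [Finset.card_map] at this
  rw [this, Nat.card_Ico]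
  omega

lemma card_pos_lt (π : Perm (Fin n)) (i : Fin n) :
    ((univ : Finset (Fin n)).filter fun j => pos π j < pos π i).card = pos π i := by
  have key : ((univ : Finset (Fin n)).filter fun j => pos π j < pos π i).card
      = ((univ : Finset (Fin n)).filter fun p : Fin n => (p : ℕ) < pos π i).card := by
    apply Finset.card_bij (fun j _ => π⁻¹ j)
    · intro a ha
      simp only [mem_filter, mem_univ, true_and] at ha ⊢
      exact ha
    · intro a _ b _ hab; exact π⁻¹.injective hab
    · intro b hb
      refine ⟨π b, ?_, by simp⟩
      simp only [mem_filter, mem_univ, true_and] at hb ⊢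
      show pos π (π b) < pos π i
      simp only [pos, Equiv.Perm.inv_def, Equiv.symm_apply_apply]
      exact hb
  rw [key, card_coe_lt _ (le_of_lt (pos_lt π i))]

lemma card_pos_gt (π : Perm (Fin n)) (i : Fin n) :
    ((univ : Finset (Fin n)).filter fun j => pos π i < pos π j).card = n - 1 - pos π i := by
  have key : ((univ : Finset (Fin n)).filter fun j => pos π i < pos π j).card
      = ((univ : Finset (Fin n)).filter fun p : Fin n => pos π i < (p : ℕ)).card := by
    apply Finset.card_bij (fun j _ => π⁻¹ j)
    · intro a ha
      simp only [mem_filter, mem_univ, true_and] at ha ⊢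
      exact ha
    · intro a _ b _ hab; exact π⁻¹.injective hab
    · intro b hb
      refine ⟨π b, ?_, by simp⟩
      simp only [mem_filter, mem_univ, true_and] at hb ⊢
      show pos π i < pos π (π b)
      simp only [pos, Equiv.Perm.inv_def, Equiv.symm_apply_apply]
      exact hb
  rw [key, card_coe_gt]

lemma keyU (π σ : Perm (Fin n)) (i : Fin n) :
    pos σ i + (Lset π σ i).card = pos π i + UU π σ i := by
  classical
  have hπ : ∀ j : Fin n, j ≠ i → pos π j ≠ pos π i := fun j hj e => hj (pos_inj e)
  have hσ : ∀ j : Fin n, j ≠ i → pos σ j ≠ pos σ i := fun j hj e => hj (pos_inj e)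
  have split : ∀ (P Q : Fin n → Prop) (_ : DecidablePred P) (_ : DecidablePred Q),
      ((univ : Finset (Fin n)).filter fun j => Q j ∧ P j).card
        + ((univ : Finset (Fin n)).filter fun j => Q j ∧ ¬ P j).card
      = ((univ : Finset (Fin n)).filter fun j => Q j).card := by
    intro P Q _ _
    rw [← Finset.filter_filter, ← Finset.filter_filter]
    exact Finset.card_filter_add_card_filter_not (p := P)
  have splitB := split (fun j => pos π j < pos π i) (fun j => pos σ j < pos σ i)
    (by infer_instance) (by infer_instance)
  have splitA := split (fun j => pos σ j < pos σ i) (fun j => pos π j < pos π i)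
    (by infer_instance) (by infer_instance)
  rw [card_pos_lt] at splitB splitA
  have eU : ((univ : Finset (Fin n)).filter fun j => pos σ j < pos σ i ∧ ¬ pos π j < pos π i)
      = Uset π σ i := by
    ext j
    simp only [mem_filter, mem_univ, true_and, Uset, dis]
    by_cases hj : j = i
    · subst hj; simp
    · have h1 := hπ j hj; have h2 := hσ j hj; omega
  have eL : ((univ : Finset (Fin n)).filter fun j => pos π j < pos π i ∧ ¬ pos σ j < pos σ i)
      = Lset π σ i := by
    ext j
    simp only [mem_filter, mem_univ, true_and, Lset, dis]
    by_cases hj : j = i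
    · subst hj; simp
    · have h1 := hπ j hj; have h2 := hσ j hj; omega
  have ecomm : ((univ : Finset (Fin n)).filter fun j => pos σ j < pos σ i ∧ pos π j < pos π i)
      = ((univ : Finset (Fin n)).filter fun j => pos π j < pos π i ∧ pos σ j < pos σ i) := by
    ext j; simp only [mem_filter]; tauto
  rw [eU, ecomm] at splitB
  rw [eL] at splitA
  unfold UU
  omega

lemma peak_le (π σ : Perm (Fin n)) (i : Fin n) : pos π i + UU π σ i ≤ n - 1 := by
  have h1 : UU π σ i ≤ n - 1 - pos π i := by
    rw [← card_pos_gt π i]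
    apply Finset.card_le_card
    intro j hj
    simp only [Uset, mem_filter, mem_univ, true_and] at hj ⊢
    exact hj.2
  have := pos_lt π i
  omega

lemma B_le_peak (π σ : Perm (Fin n)) (i : Fin n) : pos σ i ≤ pos π i + UU π σ i := by
  have := keyU π σ i; omega

noncomputable def term (φ : ℕ → ℝ) (π σ : Perm (Fin n)) (i : Fin n) : ℝ :=
  (1/2) * ((∑ j ∈ Ico (pos π i) (pos π i + UU π σ i), φ j)
         + (∑ j ∈ Ico (pos σ i) (pos π i + UU π σ i), φ j))

noncomputable def F (φ : ℕ → ℝ) (π σ : Perm (Fin n)) : ℝ := ∑ i, term φ π σ i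

lemma pos_eq_iff (π : Perm (Fin n)) {k : ℕ} (hk : k < n) (j : Fin n) :
    pos π j = k ↔ j = π ⟨k, hk⟩ := by
  constructor
  · intro e
    apply pos_inj (π := π)
    rw [e, pos_apply]
  · rintro rfl
    exact pos_apply π k hk

section Swap
variable (φ : ℕ → ℝ) (π σ : Perm (Fin n)) (h : ℕ)

lemma pos_swap (hn : h + 1 < n) (i : Fin n) :
    pos (π * adjSwap n h) i =
      if pos π i = h then h + 1 else if pos π i = h + 1 then h else pos π i := by
  have e : (π * adjSwap n h)⁻¹ i = Equiv.swap (⟨h, Nat.lt_of_succ_lt hn⟩ : Fin n) ⟨h+1, hn⟩ (π⁻¹ i) := by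
    rw [mul_inv_rev, Perm.mul_apply, adjSwap, dif_pos hn, Equiv.swap_inv]
  rw [pos, e, Equiv.swap_apply_def]
  simp only [pos, Fin.ext_iff]
  split_ifs <;> simp_all

lemma Uset_swap_other (hn : h + 1 < n) (i : Fin n) (hi : pos π i ≠ h) (hi' : pos π i ≠ h + 1) :
    Uset (π * adjSwap n h) σ i = Uset π σ i := by
  ext j
  simp only [Uset, mem_filter, mem_univ, true_and, dis]
  rw [pos_swap π h hn i, pos_swap π h hn j]
  split_ifs <;> omega

lemma pos_swap_u (hn : h + 1 < n) :
    pos (π * adjSwap n h) (π ⟨h, Nat.lt_of_succ_lt hn⟩) = h + 1 := by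
  rw [pos_swap π h hn, pos_apply]
  simp

lemma pos_swap_v (hn : h + 1 < n) :
    pos (π * adjSwap n h) (π ⟨h + 1, hn⟩) = h := by
  rw [pos_swap π h hn, pos_apply]
  simp

lemma Uset_swap_u_dis (hn : h + 1 < n)
    (hd : dis π σ (π ⟨h, Nat.lt_of_succ_lt hn⟩) (π ⟨h+1, hn⟩)) :
    UU (π * adjSwap n h) σ (π ⟨h, Nat.lt_of_succ_lt hn⟩)
      = UU π σ (π ⟨h, Nat.lt_of_succ_lt hn⟩) - 1
    ∧ 1 ≤ UU π σ (π ⟨h, Nat.lt_of_succ_lt hn⟩) := by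
  set u := π ⟨h, Nat.lt_of_succ_lt hn⟩ with hu_def
  set v := π ⟨h+1, hn⟩ with hv_def
  have hu : pos π u = h := pos_apply π h _
  have hv : pos π v = h + 1 := pos_apply π (h+1) hn
  have hvmem : v ∈ Uset π σ u := by
    simp only [Uset, mem_filter, mem_univ, true_and]
    exact ⟨hd, by omega⟩
  have hset : Uset (π * adjSwap n h) σ u = (Uset π σ u).erase v := by
    ext j
    have hjv : (j = v) ↔ pos π j = h + 1 := ⟨fun e => by rw [e, hv], fun e => (pos_eq_iff π hn j).mp e⟩
    simp only [Uset, mem_filter, mem_univ, true_and, dis, Finset.mem_erase, ne_eq, hjv]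
    rw [pos_swap π h hn j, pos_swap π h hn u, hu]
    split_ifs <;> omega
  constructor
  · rw [UU, UU, hset, Finset.card_erase_of_mem hvmem]
  · exact Finset.card_pos.mpr ⟨v, hvmem⟩

lemma Uset_swap_u_agree (hn : h + 1 < n)
    (hd : ¬ dis π σ (π ⟨h, Nat.lt_of_succ_lt hn⟩) (π ⟨h+1, hn⟩)) :
    UU (π * adjSwap n h) σ (π ⟨h, Nat.lt_of_succ_lt hn⟩)
      = UU π σ (π ⟨h, Nat.lt_of_succ_lt hn⟩) := by
  set u := π ⟨h, Nat.lt_of_succ_lt hn⟩ with hu_def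
  set v := π ⟨h+1, hn⟩ with hv_def
  have hu : pos π u = h := pos_apply π h _
  have hv : pos π v = h + 1 := pos_apply π (h+1) hn
  have hσ : pos σ u < pos σ v := by
    simp only [dis, not_not] at hd
    omega
  have hset : Uset (π * adjSwap n h) σ u = Uset π σ u := by
    ext j
    have hjv : (j = v) ↔ pos π j = h + 1 := ⟨fun e => by rw [e, hv], fun e => (pos_eq_iff π hn j).mp e⟩
    simp only [Uset, mem_filter, mem_univ, true_and, dis]
    rw [pos_swap π h hn j, pos_swap π h hn u, hu]
    by_cases hj : pos π j = h + 1
    · have : j = v := hjv.mpr hj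
      subst this
      split_ifs <;> omega
    · split_ifs <;> omega
  rw [UU, UU, hset]

lemma Uset_swap_v_dis (hn : h + 1 < n)
    (hd : dis π σ (π ⟨h, Nat.lt_of_succ_lt hn⟩) (π ⟨h+1, hn⟩)) :
    UU (π * adjSwap n h) σ (π ⟨h+1, hn⟩) = UU π σ (π ⟨h+1, hn⟩) := by
  set u := π ⟨h, Nat.lt_of_succ_lt hn⟩ with hu_def
  set v := π ⟨h+1, hn⟩ with hv_def
  have hu : pos π u = h := pos_apply π h _
  have hv : pos π v = h + 1 := pos_apply π (h+1) hn
  have hσ : pos σ v < pos σ u := by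
    have huv : u ≠ v := fun e => by rw [e] at hu; omega
    have : pos σ u ≠ pos σ v := fun e => huv (pos_inj e)
    simp only [dis] at hd
    omega
  have hset : Uset (π * adjSwap n h) σ v = Uset π σ v := by
    ext j
    have hju : (j = u) ↔ pos π j = h := ⟨fun e => by rw [e, hu], fun e => (pos_eq_iff π (Nat.lt_of_succ_lt hn) j).mp e⟩
    simp only [Uset, mem_filter, mem_univ, true_and, dis]
    rw [pos_swap π h hn j, pos_swap π h hn v, hv]
    by_cases hj : pos π j = h
    · have : j = u := hju.mpr hj
      subst this
      split_ifs <;> omega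
    · split_ifs <;> omega
  rw [UU, UU, hset]

lemma Uset_swap_v_agree (hn : h + 1 < n)
    (hd : ¬ dis π σ (π ⟨h, Nat.lt_of_succ_lt hn⟩) (π ⟨h+1, hn⟩)) :
    UU (π * adjSwap n h) σ (π ⟨h+1, hn⟩) = UU π σ (π ⟨h+1, hn⟩) + 1 := by
  set u := π ⟨h, Nat.lt_of_succ_lt hn⟩ with hu_def
  set v := π ⟨h+1, hn⟩ with hv_def
  have hu : pos π u = h := pos_apply π h _
  have hv : pos π v = h + 1 := pos_apply π (h+1) hn
  have hσ : pos σ u < pos σ v := by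
    simp only [dis, not_not] at hd
    omega
  have humem : u ∉ Uset π σ v := by
    simp only [Uset, mem_filter, mem_univ, true_and, dis]
    omega
  have hset : Uset (π * adjSwap n h) σ v = insert u (Uset π σ v) := by
    ext j
    have hju : (j = u) ↔ pos π j = h := ⟨fun e => by rw [e, hu], fun e => (pos_eq_iff π (Nat.lt_of_succ_lt hn) j).mp e⟩
    simp only [Uset, mem_filter, mem_univ, true_and, dis, Finset.mem_insert, hju]
    rw [pos_swap π h hn j, pos_swap π h hn v, hv]
    by_cases hj : pos π j = h
    · have hju2 : j = u := hju.mpr hj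
      subst hju2
      split_ifs <;> omega
    · split_ifs <;> omega
  rw [UU, UU, hset, Finset.card_insert_of_notMem humem]

lemma term_swap_other (hn : h + 1 < n) (i : Fin n) (hi : pos π i ≠ h) (hi' : pos π i ≠ h + 1) :
    term φ (π * adjSwap n h) σ i = term φ π σ i := by
  have e1 : pos (π * adjSwap n h) i = pos π i := by
    rw [pos_swap π h hn i, if_neg hi, if_neg hi']
  rw [term, term, e1, UU, UU, Uset_swap_other π σ h hn i hi hi']

lemma F_sub (hn : h + 1 < n) :
    F φ (π * adjSwap n h) σ - F φ π σ =
      (term φ (π * adjSwap n h) σ (π ⟨h, Nat.lt_of_succ_lt hn⟩)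
        - term φ π σ (π ⟨h, Nat.lt_of_succ_lt hn⟩))
      + (term φ (π * adjSwap n h) σ (π ⟨h+1, hn⟩) - term φ π σ (π ⟨h+1, hn⟩)) := by
  set u := π ⟨h, Nat.lt_of_succ_lt hn⟩ with hu_def
  set v := π ⟨h+1, hn⟩ with hv_def
  have hu : pos π u = h := pos_apply π h _
  have hv : pos π v = h + 1 := pos_apply π (h+1) hn
  have huv : u ≠ v := fun e => by rw [e, hv] at hu; omega
  rw [F, F, ← Finset.sum_sub_distrib]
  have hz : ∀ x ∈ (univ : Finset (Fin n)), x ∉ ({u, v} : Finset (Fin n)) →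
      term φ (π * adjSwap n h) σ x - term φ π σ x = 0 := by
    intro x _ hx
    simp only [Finset.mem_insert, Finset.mem_singleton, not_or] at hx
    have h1 : pos π x ≠ h := fun e => hx.1 ((pos_eq_iff π (Nat.lt_of_succ_lt hn) x).mp e)
    have h2 : pos π x ≠ h + 1 := fun e => hx.2 ((pos_eq_iff π hn x).mp e)
    rw [term_swap_other φ π σ h hn x h1 h2, sub_self]
  rw [← Finset.sum_subset (Finset.subset_univ ({u, v} : Finset (Fin n))) hz,
    Finset.sum_pair huv]

lemma F_step (hn : h + 1 < n)
    (hd : dis π σ (π ⟨h, Nat.lt_of_succ_lt hn⟩) (π ⟨h+1, hn⟩))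
    (hv0 : UU π σ (π ⟨h+1, hn⟩) = 0) :
    F φ π σ = φ h + F φ (π * adjSwap n h) σ := by
  have hu : pos π (π ⟨h, Nat.lt_of_succ_lt hn⟩) = h := pos_apply π h _
  have hv : pos π (π ⟨h+1, hn⟩) = h + 1 := pos_apply π (h+1) hn
  have hpu' : pos (π * adjSwap n h) (π ⟨h, Nat.lt_of_succ_lt hn⟩) = h + 1 := pos_swap_u π h hn
  have hpv' : pos (π * adjSwap n h) (π ⟨h+1, hn⟩) = h := pos_swap_v π h hn
  obtain ⟨hUu', hUu1⟩ := Uset_swap_u_dis π σ h hn hd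
  have hUv' := Uset_swap_v_dis π σ h hn hd
  have hsub := F_sub φ π σ h hn
  -- u part
  have hpeak : h + 1 + (UU π σ (π ⟨h, Nat.lt_of_succ_lt hn⟩) - 1)
      = h + UU π σ (π ⟨h, Nat.lt_of_succ_lt hn⟩) := by omega
  have ebot : (∑ j ∈ Ico h (h + UU π σ (π ⟨h, Nat.lt_of_succ_lt hn⟩)), φ j)
      = φ h + ∑ j ∈ Ico (h+1) (h + UU π σ (π ⟨h, Nat.lt_of_succ_lt hn⟩)), φ j :=
    Finset.sum_eq_sum_Ico_succ_bot (by omega) φ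
  have eu : term φ (π * adjSwap n h) σ (π ⟨h, Nat.lt_of_succ_lt hn⟩)
      - term φ π σ (π ⟨h, Nat.lt_of_succ_lt hn⟩) = -(φ h / 2) := by
    rw [term, term, hpu', hUu', hpeak, hu, ebot]
    ring
  -- v part
  have hBv : pos σ (π ⟨h+1, hn⟩) ≤ h := by
    have := B_le_peak (π * adjSwap n h) σ (π ⟨h+1, hn⟩)
    rw [hpv', hUv', hv0] at this
    omega
  have etop : (∑ j ∈ Ico (pos σ (π ⟨h+1, hn⟩)) (h+1), φ j)
      = (∑ j ∈ Ico (pos σ (π ⟨h+1, hn⟩)) h, φ j) + φ h :=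
    Finset.sum_Ico_succ_top hBv φ
  have ev : term φ (π * adjSwap n h) σ (π ⟨h+1, hn⟩)
      - term φ π σ (π ⟨h+1, hn⟩) = -(φ h / 2) := by
    rw [term, term, hpv', hUv', hv0, hv]
    simp only [Nat.add_zero]
    rw [Finset.Ico_self, Finset.Ico_self, Finset.sum_empty, etop]
    ring
  linarith [hsub, eu, ev]

end Swap

section Main
variable (φ : ℕ → ℝ) (π σ : Perm (Fin n)) (h : ℕ)

lemma F_lipschitz (hn : h + 1 < n)
    (hphi0 : ∀ i, i + 1 < n → 0 ≤ φ i) (hdec : ∀ i j, j ≤ i → i + 1 < n → φ i ≤ φ j) :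
    F φ π σ ≤ φ h + F φ (π * adjSwap n h) σ := by
  have hu : pos π (π ⟨h, Nat.lt_of_succ_lt hn⟩) = h := pos_apply π h _
  have hv : pos π (π ⟨h+1, hn⟩) = h + 1 := pos_apply π (h+1) hn
  have hpu' : pos (π * adjSwap n h) (π ⟨h, Nat.lt_of_succ_lt hn⟩) = h + 1 := pos_swap_u π h hn
  have hpv' : pos (π * adjSwap n h) (π ⟨h+1, hn⟩) = h := pos_swap_v π h hn
  have hsub := F_sub φ π σ h hn
  have hφh : 0 ≤ φ h := hphi0 h hn
  by_cases hd : dis π σ (π ⟨h, Nat.lt_of_succ_lt hn⟩) (π ⟨h+1, hn⟩)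
  · -- inverted pair case
    obtain ⟨hUu', hUu1⟩ := Uset_swap_u_dis π σ h hn hd
    have hUv' := Uset_swap_v_dis π σ h hn hd
    have hpeak : h + 1 + (UU π σ (π ⟨h, Nat.lt_of_succ_lt hn⟩) - 1)
        = h + UU π σ (π ⟨h, Nat.lt_of_succ_lt hn⟩) := by omega
    have ebot : (∑ j ∈ Ico h (h + UU π σ (π ⟨h, Nat.lt_of_succ_lt hn⟩)), φ j)
        = φ h + ∑ j ∈ Ico (h+1) (h + UU π σ (π ⟨h, Nat.lt_of_succ_lt hn⟩)), φ j :=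
      Finset.sum_eq_sum_Ico_succ_bot (by omega) φ
    have eu : term φ (π * adjSwap n h) σ (π ⟨h, Nat.lt_of_succ_lt hn⟩)
        - term φ π σ (π ⟨h, Nat.lt_of_succ_lt hn⟩) = -(φ h / 2) := by
      rw [term, term, hpu', hUu', hpeak, hu, ebot]
      ring
    have hBv : pos σ (π ⟨h+1, hn⟩) ≤ h + UU π σ (π ⟨h+1, hn⟩) := by
      have := B_le_peak (π * adjSwap n h) σ (π ⟨h+1, hn⟩)
      rw [hpv', hUv'] at this
      exact this
    rcases Nat.eq_zero_or_pos (UU π σ (π ⟨h+1, hn⟩)) with h0 | hpos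
    · -- exactly as F_step
      have heq := F_step φ π σ h hn hd h0
      linarith
    · -- Uv ≥ 1
      have hpkv := peak_le π σ (π ⟨h+1, hn⟩)
      rw [hv] at hpkv
      have hphile : φ (h + UU π σ (π ⟨h+1, hn⟩)) ≤ φ h :=
        hdec _ _ (by omega) (by omega)
      have hb1 : h + 1 + UU π σ (π ⟨h+1, hn⟩) = (h + UU π σ (π ⟨h+1, hn⟩)) + 1 := by omega
      have e1 : (∑ j ∈ Ico (h+1) (h + 1 + UU π σ (π ⟨h+1, hn⟩)), φ j)
          = (∑ j ∈ Ico (h+1) (h + UU π σ (π ⟨h+1, hn⟩)), φ j)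
            + φ (h + UU π σ (π ⟨h+1, hn⟩)) := by
        rw [hb1]
        exact Finset.sum_Ico_succ_top (by omega) φ
      have e2 : (∑ j ∈ Ico h (h + UU π σ (π ⟨h+1, hn⟩)), φ j)
          = φ h + ∑ j ∈ Ico (h+1) (h + UU π σ (π ⟨h+1, hn⟩)), φ j :=
        Finset.sum_eq_sum_Ico_succ_bot (by omega) φ
      have e3 : (∑ j ∈ Ico (pos σ (π ⟨h+1, hn⟩)) (h + 1 + UU π σ (π ⟨h+1, hn⟩)), φ j)
          = (∑ j ∈ Ico (pos σ (π ⟨h+1, hn⟩)) (h + UU π σ (π ⟨h+1, hn⟩)), φ j)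
            + φ (h + UU π σ (π ⟨h+1, hn⟩)) := by
        rw [hb1]
        exact Finset.sum_Ico_succ_top hBv φ
      have ev : term φ (π * adjSwap n h) σ (π ⟨h+1, hn⟩)
          - term φ π σ (π ⟨h+1, hn⟩)
          = φ h / 2 - φ (h + UU π σ (π ⟨h+1, hn⟩)) := by
        rw [term, term, hpv', hUv', hv, e1, e2, e3]
        ring
      linarith
  · -- agreeing pair case
    have hUu' := Uset_swap_u_agree π σ h hn hd
    have hUv' := Uset_swap_v_agree π σ h hn hd
    -- v part: exactly + φ h / 2
    have hb1 : h + (UU π σ (π ⟨h+1, hn⟩) + 1) = h + 1 + UU π σ (π ⟨h+1, hn⟩) := by omega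
    have e2 : (∑ j ∈ Ico h (h + 1 + UU π σ (π ⟨h+1, hn⟩)), φ j)
        = φ h + ∑ j ∈ Ico (h+1) (h + 1 + UU π σ (π ⟨h+1, hn⟩)), φ j :=
      Finset.sum_eq_sum_Ico_succ_bot (by omega) φ
    have ev : term φ (π * adjSwap n h) σ (π ⟨h+1, hn⟩)
        - term φ π σ (π ⟨h+1, hn⟩) = φ h / 2 := by
      rw [term, term, hpv', hUv', hv, hb1, e2]
      ring
    -- u part: ≥ -(φ h / 2)
    have hBu : pos σ (π ⟨h, Nat.lt_of_succ_lt hn⟩) ≤ h + UU π σ (π ⟨h, Nat.lt_of_succ_lt hn⟩) := by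
      have := B_le_peak π σ (π ⟨h, Nat.lt_of_succ_lt hn⟩)
      rw [hu] at this
      exact this
    have hpku : h + 1 + UU π σ (π ⟨h, Nat.lt_of_succ_lt hn⟩) ≤ n - 1 := by
      have := peak_le (π * adjSwap n h) σ (π ⟨h, Nat.lt_of_succ_lt hn⟩)
      rw [hpu', hUu'] at this
      exact this
    have hφpk : 0 ≤ φ (h + UU π σ (π ⟨h, Nat.lt_of_succ_lt hn⟩)) := hphi0 _ (by omega)
    rcases Nat.eq_zero_or_pos (UU π σ (π ⟨h, Nat.lt_of_succ_lt hn⟩)) with h0 | hpos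
    · have etop : (∑ j ∈ Ico (pos σ (π ⟨h, Nat.lt_of_succ_lt hn⟩)) (h+1), φ j)
          = (∑ j ∈ Ico (pos σ (π ⟨h, Nat.lt_of_succ_lt hn⟩)) h, φ j) + φ h :=
        Finset.sum_Ico_succ_top (by omega) φ
      have eu : term φ (π * adjSwap n h) σ (π ⟨h, Nat.lt_of_succ_lt hn⟩)
          - term φ π σ (π ⟨h, Nat.lt_of_succ_lt hn⟩) = φ h / 2 := by
        rw [term, term, hpu', hUu', hu, h0]
        simp only [Nat.add_zero, Finset.Ico_self, Finset.sum_empty]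
        rw [etop]
        ring
      linarith
    · have hb2 : h + 1 + UU π σ (π ⟨h, Nat.lt_of_succ_lt hn⟩)
          = (h + UU π σ (π ⟨h, Nat.lt_of_succ_lt hn⟩)) + 1 := by omega
      have e1 : (∑ j ∈ Ico (h+1) (h + 1 + UU π σ (π ⟨h, Nat.lt_of_succ_lt hn⟩)), φ j)
          = (∑ j ∈ Ico (h+1) (h + UU π σ (π ⟨h, Nat.lt_of_succ_lt hn⟩)), φ j)
            + φ (h + UU π σ (π ⟨h, Nat.lt_of_succ_lt hn⟩)) := by
        rw [hb2]
        exact Finset.sum_Ico_succ_top (by omega) φ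
      have e2' : (∑ j ∈ Ico h (h + UU π σ (π ⟨h, Nat.lt_of_succ_lt hn⟩)), φ j)
          = φ h + ∑ j ∈ Ico (h+1) (h + UU π σ (π ⟨h, Nat.lt_of_succ_lt hn⟩)), φ j :=
        Finset.sum_eq_sum_Ico_succ_bot (by omega) φ
      have e3 : (∑ j ∈ Ico (pos σ (π ⟨h, Nat.lt_of_succ_lt hn⟩)) (h + 1 + UU π σ (π ⟨h, Nat.lt_of_succ_lt hn⟩)), φ j)
          = (∑ j ∈ Ico (pos σ (π ⟨h, Nat.lt_of_succ_lt hn⟩)) (h + UU π σ (π ⟨h, Nat.lt_of_succ_lt hn⟩)), φ j)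
            + φ (h + UU π σ (π ⟨h, Nat.lt_of_succ_lt hn⟩)) := by
        rw [hb2]
        exact Finset.sum_Ico_succ_top hBu φ
      have eu : term φ (π * adjSwap n h) σ (π ⟨h, Nat.lt_of_succ_lt hn⟩)
          - term φ π σ (π ⟨h, Nat.lt_of_succ_lt hn⟩)
          = φ (h + UU π σ (π ⟨h, Nat.lt_of_succ_lt hn⟩)) - φ h / 2 := by
        rw [term, term, hpu', hUu', hu, e1, e2', e3]
        ring
      linarith

lemma term_nonneg (hphi0 : ∀ i, i + 1 < n → 0 ≤ φ i) (i : Fin n) : 0 ≤ term φ π σ i := by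
  have hpk := peak_le π σ i
  have h1 : 0 ≤ ∑ j ∈ Ico (pos π i) (pos π i + UU π σ i), φ j :=
    Finset.sum_nonneg fun j hj => by
      rw [Finset.mem_Ico] at hj
      exact hphi0 j (by omega)
  have h2 : 0 ≤ ∑ j ∈ Ico (pos σ i) (pos π i + UU π σ i), φ j :=
    Finset.sum_nonneg fun j hj => by
      rw [Finset.mem_Ico] at hj
      exact hphi0 j (by omega)
  rw [term]
  positivity

lemma measure_step (hn : h + 1 < n)
    (hd : dis π σ (π ⟨h, Nat.lt_of_succ_lt hn⟩) (π ⟨h+1, hn⟩)) :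
    (∑ i, UU (π * adjSwap n h) σ i) + 1 = ∑ i, UU π σ i := by
  have hu : pos π (π ⟨h, Nat.lt_of_succ_lt hn⟩) = h := pos_apply π h _
  have hv : pos π (π ⟨h+1, hn⟩) = h + 1 := pos_apply π (h+1) hn
  have huv : (π ⟨h, Nat.lt_of_succ_lt hn⟩) ≠ (π ⟨h+1, hn⟩) := fun e => by
    rw [e, hv] at hu; omega
  obtain ⟨hUu', hUu1⟩ := Uset_swap_u_dis π σ h hn hd
  have hUv' := Uset_swap_v_dis π σ h hn hd
  have h1 := Finset.sum_compl_add_sum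
    ({π ⟨h, Nat.lt_of_succ_lt hn⟩, π ⟨h+1, hn⟩} : Finset (Fin n))
    (fun i => UU (π * adjSwap n h) σ i)
  have h2 := Finset.sum_compl_add_sum
    ({π ⟨h, Nat.lt_of_succ_lt hn⟩, π ⟨h+1, hn⟩} : Finset (Fin n))
    (fun i => UU π σ i)
  rw [Finset.sum_pair huv] at h1 h2
  have hcomp : (∑ i ∈ ({π ⟨h, Nat.lt_of_succ_lt hn⟩, π ⟨h+1, hn⟩} : Finset (Fin n))ᶜ,
      UU (π * adjSwap n h) σ i)
      = ∑ i ∈ ({π ⟨h, Nat.lt_of_succ_lt hn⟩, π ⟨h+1, hn⟩} : Finset (Fin n))ᶜ, UU π σ i := by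
    apply Finset.sum_congr rfl
    intro x hx
    rw [Finset.mem_compl, Finset.mem_insert, Finset.mem_singleton, not_or] at hx
    have hx1 : pos π x ≠ h := fun e => hx.1 ((pos_eq_iff π (Nat.lt_of_succ_lt hn) x).mp e)
    have hx2 : pos π x ≠ h + 1 := fun e => hx.2 ((pos_eq_iff π hn x).mp e)
    rw [UU, UU, Uset_swap_other π σ h hn x hx1 hx2]
  omega

end Main

lemma UU_zero_eq {π σ : Perm (Fin n)} (hz : ∀ i, UU π σ i = 0) : π = σ := by
  have hL : ∀ i, Lset π σ i = ∅ := by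
    intro i
    rw [Finset.eq_empty_iff_forall_notMem]
    intro j hj
    simp only [Lset, mem_filter, mem_univ, true_and, dis] at hj
    have hij : i ≠ j := by
      rintro rfl
      omega
    have h1 : pos π i ≠ pos π j := fun e => hij (pos_inj e)
    have h2 : pos σ i ≠ pos σ j := fun e => hij (pos_inj e)
    have hi : i ∈ Uset π σ j := by
      simp only [Uset, mem_filter, mem_univ, true_and, dis]
      omega
    have := hz j
    rw [UU, Finset.card_eq_zero] at this
    rw [this] at hi
    exact absurd hi (Finset.notMem_empty i)
  have hBA : ∀ i, pos σ i = pos π i := by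
    intro i
    have hk := keyU π σ i
    rw [hL i, Finset.card_empty, hz i] at hk
    omega
  have hinv : π⁻¹ = σ⁻¹ := by
    apply Equiv.ext
    intro i
    exact Fin.ext (hBA i).symm
  exact inv_injective hinv

lemma F_self (φ : ℕ → ℝ) (σ : Perm (Fin n)) : F φ σ σ = 0 := by
  rw [F]
  apply Finset.sum_eq_zero
  intro i _
  have hU : UU σ σ i = 0 := by
    rw [UU, Finset.card_eq_zero, Finset.eq_empty_iff_forall_notMem]
    intro j hj
    simp only [Uset, mem_filter, mem_univ, true_and, dis] at hj
    exact hj.1 trivial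
  rw [term, hU]
  simp [Finset.Ico_self]

lemma exists_good {π σ : Perm (Fin n)} (hne : π ≠ σ) :
    ∃ h : ℕ, ∃ hn : h + 1 < n,
      dis π σ (π ⟨h, Nat.lt_of_succ_lt hn⟩) (π ⟨h+1, hn⟩)
      ∧ UU π σ (π ⟨h+1, hn⟩) = 0 := by
  classical
  have htne : ((univ : Finset (Fin n)).filter fun i => UU π σ i ≠ 0).Nonempty := by
    by_contra hemp
    rw [Finset.not_nonempty_iff_eq_empty, Finset.filter_eq_empty_iff] at hemp
    apply hne
    apply UU_zero_eq
    intro i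
    by_contra hUi
    exact hemp (Finset.mem_univ i) hUi
  obtain ⟨u, hut, hmax⟩ := Finset.exists_max_image _ (pos π) htne
  rw [Finset.mem_filter] at hut
  have hUu : UU π σ u ≠ 0 := hut.2
  have hpk := peak_le π σ u
  have hplt := pos_lt π u
  have hn : pos π u + 1 < n := by omega
  have hu_eq : π ⟨pos π u, Nat.lt_of_succ_lt hn⟩ = u :=
    ((pos_eq_iff π (Nat.lt_of_succ_lt hn) u).mp rfl).symm
  have hpv : pos π (π ⟨pos π u + 1, hn⟩) = pos π u + 1 := pos_apply π _ hn
  have hUv : UU π σ (π ⟨pos π u + 1, hn⟩) = 0 := by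
    by_contra hUv
    have hmem : (π ⟨pos π u + 1, hn⟩) ∈ (univ : Finset (Fin n)).filter fun i => UU π σ i ≠ 0 := by
      rw [Finset.mem_filter]
      exact ⟨Finset.mem_univ _, hUv⟩
    have := hmax _ hmem
    omega
  have hSne : (Uset π σ u).Nonempty := Finset.card_pos.mp (Nat.pos_of_ne_zero hUu)
  obtain ⟨j0, hj0, hmin⟩ := Finset.exists_min_image (Uset π σ u) (pos π) hSne
  have hj0' : dis π σ u j0 ∧ pos π u < pos π j0 := by
    simpa only [Uset, mem_filter, mem_univ, true_and] using hj0
  have hj0pos : pos π j0 = pos π u + 1 := by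
    by_contra hne1
    have hge : pos π u + 2 ≤ pos π j0 := by omega
    have hplt2 : pos π j0 - 1 < n := by
      have := pos_lt π j0
      omega
    have hpw : pos π (π ⟨pos π j0 - 1, hplt2⟩) = pos π j0 - 1 := pos_apply π _ hplt2
    have hUw : UU π σ (π ⟨pos π j0 - 1, hplt2⟩) = 0 := by
      by_contra hUw
      have hmem : (π ⟨pos π j0 - 1, hplt2⟩) ∈ (univ : Finset (Fin n)).filter fun i => UU π σ i ≠ 0 := by
        rw [Finset.mem_filter]
        exact ⟨Finset.mem_univ _, hUw⟩
      have := hmax _ hmem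
      omega
    have hnd1 : ¬ dis π σ u (π ⟨pos π j0 - 1, hplt2⟩) := by
      intro hdis
      have hmem : (π ⟨pos π j0 - 1, hplt2⟩) ∈ Uset π σ u := by
        simp only [Uset, mem_filter, mem_univ, true_and]
        exact ⟨hdis, by omega⟩
      have := hmin _ hmem
      omega
    have hnd2 : ¬ dis π σ (π ⟨pos π j0 - 1, hplt2⟩) j0 := by
      intro hdis
      have hmem : j0 ∈ Uset π σ (π ⟨pos π j0 - 1, hplt2⟩) := by
        simp only [Uset, mem_filter, mem_univ, true_and]
        exact ⟨hdis, by omega⟩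
      exact (Finset.card_ne_zero_of_mem hmem) hUw
    have hd := hj0'.1
    simp only [dis, not_not] at hnd1 hnd2 hd
    omega
  have hj0v : j0 = π ⟨pos π u + 1, hn⟩ :=
    (pos_eq_iff π hn j0).mp (by rw [hj0pos])
  refine ⟨pos π u, hn, ?_, hUv⟩
  rw [hu_eq, ← hj0v]
  exact hj0'.1

lemma upper (φ : ℕ → ℝ) (σ : Perm (Fin n)) :
    ∀ N (π : Perm (Fin n)), (∑ i, UU π σ i) = N →
      ∃ l : List ℕ, (∀ i ∈ l, i + 1 < n) ∧
        σ = π * (l.map (adjSwap n)).prod ∧ (l.map φ).sum = F φ π σ := by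
  intro N
  induction N using Nat.strong_induction_on with
  | _ N ih =>
    intro π hN
    by_cases hne : π = σ
    · subst hne
      exact ⟨[], by simp, by simp, by simp [F_self]⟩
    · obtain ⟨h, hn, hd, hv0⟩ := exists_good hne
      have hm := measure_step π σ h hn hd
      obtain ⟨l, hl, hls, hsum⟩ := ih (∑ i, UU (π * adjSwap n h) σ i) (by omega) _ rfl
      refine ⟨h :: l, ?_, ?_, ?_⟩
      · intro i hi
        rcases List.mem_cons.mp hi with rfl | hi
        · exact hn
        · exact hl i hi
      · rw [List.map_cons, List.prod_cons, ← mul_assoc]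
        exact hls
      · rw [List.map_cons, List.sum_cons, hsum, F_step φ π σ h hn hd hv0]

lemma lower (φ : ℕ → ℝ) (σ : Perm (Fin n))
    (hphi0 : ∀ i, i + 1 < n → 0 ≤ φ i) (hdec : ∀ i j, j ≤ i → i + 1 < n → φ i ≤ φ j) :
    ∀ (l : List ℕ) (π : Perm (Fin n)), (∀ i ∈ l, i + 1 < n) →
      σ = π * (l.map (adjSwap n)).prod → F φ π σ ≤ (l.map φ).sum := by
  intro l
  induction l with
  | nil =>
    intro π _ hls
    simp only [List.map_nil, List.prod_nil, mul_one] at hls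
    subst hls
    rw [List.map_nil, List.sum_nil, F_self]
  | cons h t iht =>
    intro π hl hls
    have hn : h + 1 < n := hl h List.mem_cons_self
    rw [List.map_cons, List.prod_cons, ← mul_assoc] at hls
    have hrec := iht (π * adjSwap n h) (fun i hi => hl i (List.mem_cons_of_mem h hi)) hls
    have hlip := F_lipschitz φ π σ h hn hphi0 hdec
    rw [List.map_cons, List.sum_cons]
    linarith

lemma F_eq_rhs (φ : ℕ → ℝ) (π σ : Perm (Fin n)) :
    F φ π σ = ∑ i : Fin n,
      (1 / 2) *
        ((∑ j ∈ Finset.Ico ((π⁻¹ i : Fin n) : ℕ)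
            ((((π⁻¹ i : Fin n) : ℕ) + ((σ⁻¹ i : Fin n) : ℕ) + (invWith π σ i).card) / 2), φ j) +
         (∑ j ∈ Finset.Ico ((σ⁻¹ i : Fin n) : ℕ)
            ((((π⁻¹ i : Fin n) : ℕ) + ((σ⁻¹ i : Fin n) : ℕ) + (invWith π σ i).card) / 2), φ j)) := by
  classical
  rw [F]
  apply Finset.sum_congr rfl
  intro i _
  have hK : (invWith π σ i).card = UU π σ i + (Lset π σ i).card := by
    have hdisset : invWith π σ i = (univ : Finset (Fin n)).filter fun j => dis π σ i j := by
      ext j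
      simp only [invWith, mem_filter, mem_univ, true_and, dis, pos, Fin.lt_def]
      simp
    have split := Finset.card_filter_add_card_filter_not
      (s := (univ : Finset (Fin n)).filter fun j => dis π σ i j)
      (p := fun j => pos π i < pos π j)
    rw [Finset.filter_filter, Finset.filter_filter] at split
    have eU : ((univ : Finset (Fin n)).filter fun j => dis π σ i j ∧ pos π i < pos π j)
        = Uset π σ i := rfl
    have eL : ((univ : Finset (Fin n)).filter fun j => dis π σ i j ∧ ¬ pos π i < pos π j)
        = Lset π σ i := by
      ext j
      simp only [mem_filter, mem_univ, true_and, Lset, dis]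
      by_cases hj : j = i
      · subst hj; simp
      · have h1 : pos π j ≠ pos π i := fun e => hj (pos_inj e)
        omega
    rw [eU, eL] at split
    rw [hdisset, ← split, UU]
  have hk2 := keyU π σ i
  have hell : (((π⁻¹ i : Fin n) : ℕ) + ((σ⁻¹ i : Fin n) : ℕ) + (invWith π σ i).card) / 2
      = pos π i + UU π σ i := by
    have hA : ((π⁻¹ i : Fin n) : ℕ) = pos π i := rfl
    have hB : ((σ⁻¹ i : Fin n) : ℕ) = pos σ i := rfl
    rw [hA, hB, hK]
    omega
  rw [hell, term]
  rfl

end Stmt9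

theorem stmt9 (n : ℕ) (φ : ℕ → ℝ)
    (hφ0 : ∀ i, i + 1 < n → 0 ≤ φ i)
    (hdec : ∀ i j, j ≤ i → i + 1 < n → φ i ≤ φ j)
    (π σ : Equiv.Perm (Fin n)) :
    wKendall φ π σ = ∑ i : Fin n,
      (1 / 2) *
        ((∑ j ∈ Finset.Ico ((π⁻¹ i : Fin n) : ℕ)
            ((((π⁻¹ i : Fin n) : ℕ) + ((σ⁻¹ i : Fin n) : ℕ) + (invWith π σ i).card) / 2), φ j) +
         (∑ j ∈ Finset.Ico ((σ⁻¹ i : Fin n) : ℕ)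
            ((((π⁻¹ i : Fin n) : ℕ) + ((σ⁻¹ i : Fin n) : ℕ) + (invWith π σ i).card) / 2), φ j)) := by
  rw [← Stmt9.F_eq_rhs]
  obtain ⟨l, hl, hls, hsum⟩ := Stmt9.upper φ σ _ π rfl
  have hlb : ∀ w ∈ {w | ∃ l : List ℕ, (∀ i ∈ l, i + 1 < n) ∧
      σ = π * (l.map (adjSwap n)).prod ∧ (l.map φ).sum = w}, Stmt9.F φ π σ ≤ w := by
    rintro w ⟨l', hl', hls', rfl⟩
    exact Stmt9.lower φ σ hφ0 hdec l' π hl' hls'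
  have hmem : Stmt9.F φ π σ ∈ {w | ∃ l : List ℕ, (∀ i ∈ l, i + 1 < n) ∧
      σ = π * (l.map (adjSwap n)).prod ∧ (l.map φ).sum = w} := ⟨l, hl, hls, hsum⟩
  exact le_antisymm (csInf_le ⟨_, hlb⟩ hmem) (le_csInf ⟨_, hmem⟩ hlb)
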